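/- Let Λ be the tree of all injective functions t from a countable ordinal dom(t) into ℕ whose range ℕ \ ran(t) is infinite (i.e. ran(t) is coinfinite), ordered by extension of functions, and define λ : Λ → ℝ by λ(t) = Σ_{α ∈ dom(t)} 2^{−t(α)}. Equip Λ with the λ-topology, in which the basic neighbourhoods of t are the sets {u ∈ Λ : t ⪯ u and λ(u) < λ(t) + ε} for ε > 0. Then Λ with the λ-topology is a Baire space. -/

import Mathlib

open Filter Topology Set

noncomputable section

/-- `n` is a norm on `X` equivalent to the given norm. -/
def IsEquivNorm {X : Type*} [SeminormedAddCommGroup X] [Module ℝ X] (n : X → ℝ) : Prop :=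
  (∀ (a : ℝ) (x : X), n (a • x) = |a| * n x) ∧
  (∀ x y : X, n (x + y) ≤ n x + n y) ∧
  ∃ c C : ℝ, 0 < c ∧ ∀ x : X, c * ‖x‖ ≤ n x ∧ n x ≤ C * ‖x‖

/-- Local uniform convexity of a norm-like function `n`. -/
def IsLUR {X : Type*} [AddCommGroup X] (n : X → ℝ) : Prop :=
  ∀ (x : X) (xs : ℕ → X),
    Tendsto (fun k => n (xs k)) atTop (𝓝 (n x)) →
    Tendsto (fun k => n (x + xs k)) atTop (𝓝 (2 * n x)) →
    Tendsto (fun k => n (x - xs k)) atTop (𝓝 0)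

/-- Midpoint local uniform convexity. -/
def IsMLUR {X : Type*} [AddCommGroup X] (n : X → ℝ) : Prop :=
  ∀ (x : X) (hs : ℕ → X),
    Tendsto (fun k => n (x + hs k)) atTop (𝓝 (n x)) →
    Tendsto (fun k => n (x - hs k)) atTop (𝓝 (n x)) →
    Tendsto (fun k => n (hs k)) atTop (𝓝 0)

/-- Strict convexity of a norm-like function `n`. -/
def IsStrictConvexNorm {X : Type*} [AddCommGroup X] [Module ℝ X] (n : X → ℝ) : Prop :=
  ∀ x y : X, n x = n y → n ((2⁻¹ : ℝ) • (x + y)) = n x → x = y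

/-- The dual norm of `n` on the continuous dual of `X`. -/
def dualNorm {X : Type*} [SeminormedAddCommGroup X] [NormedSpace ℝ X] (n : X → ℝ)
    (ξ : X →L[ℝ] ℝ) : ℝ :=
  sSup ((fun x => ξ x) '' {x : X | n x ≤ 1})

/-- Weak local uniform convexity. -/
def IsWLUR {X : Type*} [SeminormedAddCommGroup X] [NormedSpace ℝ X] (n : X → ℝ) : Prop :=
  ∀ (x : X) (xs : ℕ → X),
    Tendsto (fun k => n (xs k)) atTop (𝓝 (n x)) →
    Tendsto (fun k => n (x + xs k)) atTop (𝓝 (2 * n x)) →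
    ∀ ξ : X →L[ℝ] ℝ, Tendsto (fun k => ξ (xs k)) atTop (𝓝 (ξ x))

/-- The weak topology of a normed space: the coarsest topology making all continuous
linear functionals continuous. -/
def weakTopology (X : Type*) [SeminormedAddCommGroup X] [NormedSpace ℝ X] :
    TopologicalSpace X :=
  ⨅ ξ : X →L[ℝ] ℝ, TopologicalSpace.induced (fun x => ξ x) inferInstance

/-- The Kadec property: weak and norm topologies coincide on the unit sphere of `n`. -/
def IsKadec {X : Type*} [SeminormedAddCommGroup X] [NormedSpace ℝ X] (n : X → ℝ) : Prop :=
  TopologicalSpace.induced (Subtype.val : {x : X // n x = 1} → X) (weakTopology X) =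
    TopologicalSpace.induced (Subtype.val : {x : X // n x = 1} → X) inferInstance

/-- A tree: every set of strict predecessors is well-ordered. -/
def IsTree (Υ : Type*) [PartialOrder Υ] : Prop :=
  ∀ t : Υ, IsWellOrder {s : Υ // s < t} (· < ·)

/-- A Hausdorff tree: points whose predecessor set is nonempty with no greatest element
are determined by their sets of strict predecessors. -/
def IsHausdorffTree (Υ : Type*) [PartialOrder Υ] : Prop :=
  ∀ t t' : Υ, (Set.Iio t).Nonempty → (∀ s, s < t → ∃ s', s < s' ∧ s' < t) →
    Set.Iio t = Set.Iio t' → t = t'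

/-- The locally compact topology of a tree: the coarsest topology in which every
interval `(0, t]` is both open and closed. -/
def treeTopology (Υ : Type*) [PartialOrder Υ] : TopologicalSpace Υ :=
  TopologicalSpace.generateFrom
    ({S | ∃ t : Υ, S = Set.Iic t} ∪ {S | ∃ t : Υ, S = (Set.Iic t)ᶜ})

/-- The tree `Υ` carrying its locally compact topology. -/
def TreeSpace (Υ : Type*) [PartialOrder Υ] : Type _ := Υ

instance (Υ : Type*) [PartialOrder Υ] : TopologicalSpace (TreeSpace Υ) := treeTopology Υ

/-- `C₀(Υ)`: continuous real functions on the tree vanishing at infinity, with sup norm. -/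
abbrev C0Tree (Υ : Type*) [PartialOrder Υ] := ZeroAtInftyContinuousMap (TreeSpace Υ) ℝ

/-- Identification of the tree and its topological incarnation. -/
def toTree {Υ : Type*} [PartialOrder Υ] (t : Υ) : TreeSpace Υ := t

/-- `t` is a good point for `ρ`: off a finite set of immediate successors of `t`,
`ρ` is bounded away above `ρ t`.  A bad point is a point that is not good. -/
def GoodPoint {Υ : Type*} [PartialOrder Υ] (ρ : Υ → ℝ) (t : Υ) : Prop :=
  ∃ (F : Finset Υ) (c : ℝ), ρ t < c ∧ ∀ u : Υ, t ⋖ u → u ∉ F → c ≤ ρ u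

/-- A subset `Γ` of a tree is ever-branching if no `t ∈ Γ` has totally ordered
set of successors within `Γ`. -/
def EverBranching {Υ : Type*} [PartialOrder Υ] (Γ : Set Υ) : Prop :=
  ∀ t ∈ Γ, ∃ u ∈ Γ, ∃ v ∈ Γ, t ≤ u ∧ t ≤ v ∧ ¬ u ≤ v ∧ ¬ v ≤ u

/-- `ρ` is constant on no (nonempty) ever-branching subset. -/
def ConstOnNoEverBranching {Υ : Type*} [PartialOrder Υ] (ρ : Υ → ℝ) : Prop :=
  ∀ Γ : Set Υ, Γ.Nonempty → EverBranching Γ → ¬ ∃ c : ℝ, ∀ t ∈ Γ, ρ t = c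

/-- The function `μ` associated with an equivalent norm `n` on `C₀(Υ)`:
`μ t` is the infimum of `n f` over all `f` of the form `𝟙_(0,t] + f'` with
`f'` supported in `(t, ∞)`. -/
def muFn {Υ : Type*} [PartialOrder Υ] (n : C0Tree Υ → ℝ) (t : Υ) : ℝ :=
  sInf (n '' {f : C0Tree Υ |
    (∀ s : Υ, s ≤ t → f (toTree s) = 1) ∧
    ∀ s : Υ, ¬ s ≤ t → ¬ t < s → f (toTree s) = 0})

/-- A copy of `α` carrying the discrete topology. -/
def DiscreteOf (α : Type*) : Type _ := α

instance (α : Type*) : TopologicalSpace (DiscreteOf α) := ⊥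
instance (α : Type*) : DiscreteTopology (DiscreteOf α) := ⟨rfl⟩

/-- The space `c₀(α)` with its sup norm. -/
abbrev c0 (α : Type*) := ZeroAtInftyContinuousMap (DiscreteOf α) ℝ

/-- Identification of `α` with its discrete copy. -/
def toDisc {α : Type*} (a : α) : DiscreteOf α := a

end

/-- The tree `Λ` of injective functions from a countable ordinal into `ℕ` with coinfinite
range (normalised to take the value `0` beyond their domain), ordered by extension. -/
def LambdaTree : Type 1 :=
  {p : Ordinal.{0} × (Ordinal.{0} → ℕ) //
    p.1 < (Cardinal.aleph 1).ord ∧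
    (∀ β, p.1 ≤ β → p.2 β = 0) ∧
    Set.InjOn p.2 (Set.Iio p.1) ∧
    (p.2 '' Set.Iio p.1)ᶜ.Infinite}

instance : PartialOrder LambdaTree where
  le s t := s.1.1 ≤ t.1.1 ∧ ∀ β, β < s.1.1 → s.1.2 β = t.1.2 β
  le_refl s := ⟨le_rfl, fun _ _ => rfl⟩
  le_trans s t u hst htu :=
    ⟨hst.1.trans htu.1, fun β hβ => (hst.2 β hβ).trans (htu.2 β (lt_of_lt_of_le hβ hst.1))⟩
  le_antisymm s t hst hts := by
    have hd : s.1.1 = t.1.1 := le_antisymm hst.1 hts.1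
    apply Subtype.ext
    apply Prod.ext
    · exact hd
    · funext β
      by_cases hβ : β < s.1.1
      · exact hst.2 β hβ
      · rw [s.2.2.1 β (not_lt.mp hβ), t.2.2.1 β (hd ▸ not_lt.mp hβ)]

/-- The function `λ(t) = Σ_{α ∈ dom t} 2^{-t(α)}` on the tree `Λ`. -/
noncomputable def lamFn (t : LambdaTree) : ℝ :=
  ∑' β : (Set.Iio t.1.1), ((1 : ℝ) / 2) ^ (t.1.2 β)

/-- The λ-topology on `Λ`: basic neighbourhoods of `t` are the sets
`{u : t ⪯ u, λ(u) < λ(t) + ε}`. -/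
noncomputable def lambdaTopology : TopologicalSpace LambdaTree :=
  TopologicalSpace.generateFrom
    {S | ∃ (t : LambdaTree) (ε : ℝ), 0 < ε ∧ S = {u : LambdaTree | t ≤ u ∧ lamFn u < lamFn t + ε}}

/-- The tree `Λ` carrying the λ-topology. -/
def LambdaSpace : Type 1 := LambdaTree

noncomputable instance : TopologicalSpace LambdaSpace := lambdaTopology

namespace Statement16

noncomputable section
open Set TopologicalSpace

/-- geometric weights -/
def g (k : ℕ) : ℝ := ((1 : ℝ) / 2) ^ k

lemma g_pos (k : ℕ) : 0 < g k := by unfold g; positivity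

lemma g_nonneg (k : ℕ) : 0 ≤ g k := (g_pos k).le

lemma summable_g : Summable g := summable_geometric_two

lemma summable_ind (A : Set ℕ) : Summable (A.indicator g) :=
  summable_g.indicator A

lemma ind_nonneg (A : Set ℕ) (k : ℕ) : 0 ≤ A.indicator g k :=
  Set.indicator_apply_nonneg fun _ => g_nonneg k

lemma ind_le_of_imp {A C : Set ℕ} {k : ℕ} (h : k ∈ A → k ∈ C) :
    A.indicator g k ≤ C.indicator g k := by
  by_cases hk : k ∈ A
  · rw [Set.indicator_of_mem hk, Set.indicator_of_mem (h hk)]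
  · rw [Set.indicator_of_notMem hk]
    exact ind_nonneg C k

/-- the range of `t` -/
def ran (t : LambdaTree) : Set ℕ := t.1.2 '' Set.Iio t.1.1

lemma lamFn_eq (t : LambdaTree) : lamFn t = ∑' k : ℕ, (ran t).indicator g k := by
  have hinj : Function.Injective (fun β : Set.Iio t.1.1 => t.1.2 β) := by
    intro β γ h
    exact Subtype.ext (t.2.2.2.1 β.2 γ.2 h)
  have hsupp : Function.support ((ran t).indicator g) ⊆
      Set.range (fun β : Set.Iio t.1.1 => t.1.2 β) := by
    intro k hk
    have hm : k ∈ ran t := by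
      by_contra hm
      exact hk (Set.indicator_of_notMem hm g)
    obtain ⟨β, hβ, hβk⟩ := hm
    exact ⟨⟨β, hβ⟩, hβk⟩
  have heq := hinj.tsum_eq (f := (ran t).indicator g) hsupp
  rw [lamFn, ← heq]
  apply tsum_congr
  intro β
  have hb : t.1.2 β.1 ∈ ran t := ⟨β.1, β.2, rfl⟩
  rw [Set.indicator_of_mem hb]
  rfl

lemma ran_mono {s t : LambdaTree} (h : s ≤ t) : ran s ⊆ ran t := by
  rintro k ⟨β, hβ, rfl⟩
  exact ⟨β, lt_of_lt_of_le hβ h.1, (h.2 β hβ).symm⟩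

lemma lamFn_mono {s t : LambdaTree} (h : s ≤ t) : lamFn s ≤ lamFn t := by
  rw [lamFn_eq, lamFn_eq]
  exact Summable.tsum_le_tsum (fun k => ind_le_of_imp fun hk => ran_mono h hk)
    (summable_ind _) (summable_ind _)

lemma lamFn_add_le {s t : LambdaTree} (h : s ≤ t) {m : ℕ} (hmt : m ∈ ran t)
    (hms : m ∉ ran s) : lamFn s + g m ≤ lamFn t := by
  have h1 : ∑' k : ℕ, ({m} : Set ℕ).indicator g k = g m := by
    have hfun : ({m} : Set ℕ).indicator g = fun k => if k = m then g m else 0 := by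
      funext k
      by_cases hk : k = m <;> simp [Set.indicator_apply, hk]
    rw [hfun]
    exact tsum_ite_eq m (fun _ => g m)
  have hdisj : Disjoint (ran s) ({m} : Set ℕ) := by
    simp [Set.disjoint_singleton_right, hms]
  have hsum : ∑' k : ℕ, (ran s ∪ {m}).indicator g k = lamFn s + g m := by
    simp only [Set.indicator_union_of_disjoint hdisj g, Pi.add_apply]
    rw [Summable.tsum_add (summable_ind _) (summable_ind _), h1, lamFn_eq s]
  have hle : ∑' k : ℕ, (ran s ∪ {m}).indicator g k ≤ ∑' k : ℕ, (ran t).indicator g k := by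
    refine Summable.tsum_le_tsum (fun k => ind_le_of_imp fun hk => ?_) (summable_ind _) (summable_ind _)
    rcases hk with hk | hk
    · exact ran_mono h hk
    · rw [Set.mem_singleton_iff] at hk
      exact hk ▸ hmt
  rw [lamFn_eq t, ← hsum]
  exact hle

/-- Basic open sets of the λ-topology. -/
def B (t : LambdaTree) (ε : ℝ) : Set LambdaTree := {u : LambdaTree | t ≤ u ∧ lamFn u < lamFn t + ε}

lemma self_mem_B {t : LambdaTree} {ε : ℝ} (hε : 0 < ε) : t ∈ B t ε :=
  ⟨le_rfl, by linarith⟩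

lemma B_half_subset (t : LambdaTree) {ε : ℝ} (hε : 0 < ε) : B t (ε / 2) ⊆ B t ε := by
  rintro u ⟨h1, h2⟩
  exact ⟨h1, by linarith⟩

/-- The basic sets form a topological basis of the λ-topology. -/
lemma isBasis : IsTopologicalBasis
    ({S | ∃ (t : LambdaTree) (ε : ℝ), 0 < ε ∧ S = B t ε} : Set (Set LambdaSpace)) := by
  refine ⟨?_, ?_, rfl⟩
  · rintro S₁ ⟨t₁, ε₁, hε₁, rfl⟩ S₂ ⟨t₂, ε₂, hε₂, rfl⟩ x hx
    obtain ⟨⟨h₁le, h₁lt⟩, ⟨h₂le, h₂lt⟩⟩ := hx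
    have hδ : 0 < min (lamFn t₁ + ε₁ - lamFn x) (lamFn t₂ + ε₂ - lamFn x) :=
      lt_min (by linarith) (by linarith)
    refine ⟨B x (min (lamFn t₁ + ε₁ - lamFn x) (lamFn t₂ + ε₂ - lamFn x)),
      ⟨x, _, hδ, rfl⟩, self_mem_B hδ, ?_⟩
    rintro u ⟨hxu, hu⟩
    have hm1 := min_le_left (lamFn t₁ + ε₁ - lamFn x) (lamFn t₂ + ε₂ - lamFn x)
    have hm2 := min_le_right (lamFn t₁ + ε₁ - lamFn x) (lamFn t₂ + ε₂ - lamFn x)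
    exact ⟨⟨h₁le.trans hxu, by linarith⟩, ⟨h₂le.trans hxu, by linarith⟩⟩
  · apply Set.eq_univ_of_forall
    intro x
    exact Set.mem_sUnion.2 ⟨B x 1, ⟨x, 1, one_pos, rfl⟩, self_mem_B one_pos⟩

lemma isOpen_B (t : LambdaTree) {ε : ℝ} (hε : 0 < ε) : IsOpen (X := LambdaSpace) (B t ε) :=
  isBasis.isOpen ⟨t, ε, hε, rfl⟩

lemma exists_B_subset {V : Set LambdaSpace} (hV : IsOpen V) {x : LambdaTree} (hx : x ∈ V) :
    ∃ δ : ℝ, 0 < δ ∧ B x δ ⊆ V := by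
  obtain ⟨S, ⟨t, ε, hε, rfl⟩, hxS, hSV⟩ := isBasis.exists_subset_of_mem_open hx hV
  obtain ⟨htx, hlt⟩ := hxS
  refine ⟨lamFn t + ε - lamFn x, by linarith, ?_⟩
  rintro u ⟨hxu, hu⟩
  exact hSV ⟨htx.trans hxu, by linarith⟩

end

end Statement16
namespace Statement16

noncomputable section
open Set TopologicalSpace

/-- Every monotone sequence in `Λ` whose ranges miss a common infinite set of naturals
has an upper bound in `Λ`. -/
lemma exists_ub (x : ℕ → LambdaTree) (hmono : Monotone x)
    (hcoinf : {m : ℕ | ∀ n, m ∉ ran (x n)}.Infinite) :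
    ∃ u : LambdaTree, (∀ n, x n ≤ u) ∧ ran u = ⋃ n, ran (x n) := by
  classical
  set α : Ordinal := ⨆ n, (x n).1.1 with hα
  set f : Ordinal → ℕ :=
    fun β => if h : ∃ n, β < (x n).1.1 then (x h.choose).1.2 β else 0 with hf
  have hdomle : ∀ n, (x n).1.1 ≤ α := fun n =>
    le_ciSup (Ordinal.bddAbove_range _) n
  have hlt : ∀ β, β < α → ∃ n, β < (x n).1.1 := by
    intro β hβ
    by_contra hc
    push_neg at hc
    exact absurd (ciSup_le fun n => hc n) (not_le.2 hβ)
  have hagree : ∀ n β, β < (x n).1.1 → f β = (x n).1.2 β := by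
    intro n β hβ
    have hex : ∃ m, β < (x m).1.1 := ⟨n, hβ⟩
    have h0 : f β = (x hex.choose).1.2 β := dif_pos hex
    rcases le_total hex.choose n with h | h
    · rw [h0, (hmono h).2 β hex.choose_spec]
    · rw [h0, ← (hmono h).2 β hβ]
  have h1 : α < (Cardinal.aleph 1).ord := by
    apply Ordinal.iSup_lt_ord
    · rw [Cardinal.isRegular_aleph_one.cof_eq, Cardinal.mk_nat]
      exact Cardinal.aleph0_lt_aleph_one
    · exact fun n => (x n).2.1
  have h2 : ∀ β, α ≤ β → f β = 0 := by
    intro β hβ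
    apply dif_neg
    rintro ⟨n, hn⟩
    exact absurd ((hdomle n).trans hβ) (not_le.2 hn)
  have h3 : Set.InjOn f (Set.Iio α) := by
    intro β₁ hβ₁ β₂ hβ₂ heq
    obtain ⟨n₁, hn₁⟩ := hlt β₁ hβ₁
    obtain ⟨n₂, hn₂⟩ := hlt β₂ hβ₂
    have hb₁ : β₁ < (x (max n₁ n₂)).1.1 := lt_of_lt_of_le hn₁ (hmono (le_max_left _ _)).1
    have hb₂ : β₂ < (x (max n₁ n₂)).1.1 := lt_of_lt_of_le hn₂ (hmono (le_max_right _ _)).1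
    rw [hagree _ _ hb₁, hagree _ _ hb₂] at heq
    exact (x (max n₁ n₂)).2.2.2.1 hb₁ hb₂ heq
  have h4 : (f '' Set.Iio α)ᶜ.Infinite := by
    apply hcoinf.mono
    rintro m hm ⟨β, hβ, rfl⟩
    obtain ⟨n, hn⟩ := hlt β hβ
    exact hm n ⟨β, hn, (hagree n β hn).symm⟩
  refine ⟨⟨(α, f), h1, h2, h3, h4⟩, fun n => ⟨hdomle n, fun β hβ => (hagree n β hβ).symm⟩, ?_⟩
  ext m
  constructor
  · rintro ⟨β, hβ, rfl⟩
    obtain ⟨n, hn⟩ := hlt β hβ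
    exact Set.mem_iUnion.2 ⟨n, β, hn, (hagree n β hn).symm⟩
  · intro hm
    obtain ⟨n, β, hβ, rfl⟩ := Set.mem_iUnion.1 hm
    exact ⟨β, lt_of_lt_of_le hβ (hdomle n), hagree n β hβ⟩

lemma B_mono (t : LambdaTree) {δ ε : ℝ} (h : δ ≤ ε) : B t δ ⊆ B t ε := by
  rintro u ⟨h1, h2⟩
  exact ⟨h1, lt_of_lt_of_le h2 (by linarith)⟩

/-- One step of the recursive construction. -/
lemma step {W : Set LambdaSpace} (hWo : IsOpen W) (hWd : Dense W)
    (n : ℕ) (x : LambdaTree) (ε : ℝ) (hε : 0 < ε) :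
    ∃ p : LambdaTree × ℝ × ℕ, 0 < p.2.1 ∧ p.1 ∈ B x (ε / 2) ∧
      B p.1 p.2.1 ⊆ W ∩ B x (ε / 2) ∧ n ≤ p.2.2 ∧ p.2.2 ∉ ran p.1 ∧ p.2.1 ≤ g p.2.2 := by
  have hhalf : (0 : ℝ) < ε / 2 := by linarith
  obtain ⟨y, hyB, hyW⟩ :=
    hWd.inter_open_nonempty _ (isOpen_B x hhalf) ⟨x, self_mem_B hhalf⟩
  have hyWB : y ∈ W ∩ B x (ε / 2) := ⟨hyW, hyB⟩
  obtain ⟨δ₀, hδ₀, hδ₀sub⟩ :=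
    exists_B_subset (hWo.inter (isOpen_B x hhalf)) hyWB
  obtain ⟨m, hm, hnm⟩ := (y.2.2.2.2).exists_gt n
  refine ⟨(y, min δ₀ (g m), m), lt_min hδ₀ (g_pos m), hyB, ?_, hnm.le, hm, min_le_right _ _⟩
  exact (B_mono y (min_le_left _ _)).trans hδ₀sub

end

end Statement16
/-- Lemma 10.1: `Λ` with the λ-topology is a Baire space. -/
theorem statement16 : BaireSpace LambdaSpace := by
  classical
  open Statement16 in
  constructor
  intro f hfo hfd
  rw [dense_iff_inter_open]
  intro W hWo hWne
  obtain ⟨x₀, hx₀⟩ := hWne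
  obtain ⟨ε₀, hε₀, hB₀⟩ := exists_B_subset hWo hx₀
  have key : ∀ (n : ℕ) (x : LambdaTree) (ε : ℝ), 0 < ε →
      ∃ p : LambdaTree × ℝ × ℕ, 0 < p.2.1 ∧ p.1 ∈ B x (ε / 2) ∧
        B p.1 p.2.1 ⊆ f n ∩ B x (ε / 2) ∧ n ≤ p.2.2 ∧ p.2.2 ∉ ran p.1 ∧ p.2.1 ≤ g p.2.2 :=
    fun n x ε hε => step (hfo n) (hfd n) n x ε hε
  let F : ∀ _ : ℕ, {p : LambdaTree × ℝ × ℕ // 0 < p.2.1} → {p : LambdaTree × ℝ × ℕ // 0 < p.2.1} :=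
    fun n q => ⟨(key n q.1.1 q.1.2.1 q.2).choose, ((key n q.1.1 q.1.2.1 q.2).choose_spec).1⟩
  let seq : ℕ → {p : LambdaTree × ℝ × ℕ // 0 < p.2.1} :=
    fun n => Nat.rec ⟨(x₀, ε₀, 0), hε₀⟩ F n
  set X : ℕ → LambdaTree := fun n => (seq n).1.1 with hX
  set E : ℕ → ℝ := fun n => (seq n).1.2.1 with hE
  set M : ℕ → ℕ := fun n => (seq n).1.2.2 with hM
  have hEpos : ∀ n, 0 < E n := fun n => (seq n).2
  have hspec : ∀ n, X (n + 1) ∈ B (X n) (E n / 2) ∧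
      B (X (n + 1)) (E (n + 1)) ⊆ f n ∩ B (X n) (E n / 2) ∧
      n ≤ M (n + 1) ∧ M (n + 1) ∉ ran (X (n + 1)) ∧ E (n + 1) ≤ g (M (n + 1)) := by
    intro n
    have h := (key n (X n) (E n) (seq n).2).choose_spec
    exact ⟨h.2.1, h.2.2.1, h.2.2.2⟩
  have hmono : Monotone X := monotone_nat_of_le_succ (fun n => (hspec n).1.1)
  have hchain : ∀ n k, n ≤ k → B (X k) (E k) ⊆ B (X n) (E n) := by
    intro n k hnk
    induction k, hnk using Nat.le_induction with
    | base => exact subset_rfl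
    | succ k hk ih =>
      refine subset_trans (fun u hu => ?_) ih
      exact B_mono (X k) (by linarith [hEpos k]) ((hspec k).2.1 hu).2
  have hmem : ∀ n k, n + 1 ≤ k → X k ∈ f n ∩ B (X n) (E n / 2) :=
    fun n k h => (hspec n).2.1 (hchain (n + 1) k h (self_mem_B (hEpos k)))
  have hM_notin : ∀ n k, M (n + 1) ∉ ran (X k) := by
    intro n k
    rcases le_or_gt k (n + 1) with h | h
    · intro hc
      exact (hspec n).2.2.2.1 (ran_mono (hmono h) hc)
    · intro hc
      have h1 := lamFn_add_le (hmono h.le) hc (hspec n).2.2.2.1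
      have h2 := (hmem (n + 1) k h).2.2
      have h3 := (hspec (n + 1)).2.2.2.2
      have h4 := g_pos (M (n + 2))
      have h5 := (hspec n).2.2.2.2
      have h6 := g_pos (M (n + 1))
      linarith [(hmem (n + 1) k h).2.2]
  have hcoinf : {m : ℕ | ∀ k, m ∉ ran (X k)}.Infinite := by
    apply Set.infinite_of_not_bddAbove
    rintro ⟨b, hb⟩
    have hmem' : M (b + 1 + 1) ∈ {m : ℕ | ∀ k, m ∉ ran (X k)} := fun k => hM_notin (b + 1) k
    have := hb hmem'
    have := (hspec (b + 1)).2.2.1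
    omega
  obtain ⟨u, hule, huran⟩ := exists_ub X hmono hcoinf
  have hub : ∀ n, lamFn u ≤ lamFn (X n) + E n / 2 := by
    intro n
    rw [lamFn_eq]
    apply Summable.tsum_le_of_sum_le (summable_ind _)
    intro s
    set w : ℕ → ℕ := fun k => if h : ∃ i, k ∈ ran (X i) then h.choose else 0 with hw
    set j : ℕ := (n + 1) ⊔ s.sup w with hj
    calc ∑ k ∈ s, (ran u).indicator g k
        ≤ ∑ k ∈ s, (ran (X j)).indicator g k := by
          refine Finset.sum_le_sum fun k hk => ind_le_of_imp fun hkr => ?_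
          have hex : ∃ i, k ∈ ran (X i) := Set.mem_iUnion.1 (huran ▸ hkr)
          have hwk : w k = hex.choose := dif_pos hex
          have hk1 : k ∈ ran (X (w k)) := hwk ▸ hex.choose_spec
          exact ran_mono (hmono (le_trans (Finset.le_sup hk) le_sup_right)) hk1
      _ ≤ lamFn (X j) := by
          rw [lamFn_eq]
          exact Summable.sum_le_tsum s (fun k _ => ind_nonneg _ k) (summable_ind _)
      _ ≤ lamFn (X n) + E n / 2 := (hmem n j le_sup_left).2.2.le
  have humem : ∀ n, u ∈ B (X n) (E n) := by
    intro n
    refine ⟨hule n, lt_of_le_of_lt (hub n) ?_⟩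
    linarith [hEpos n]
  refine ⟨u, ?_, Set.mem_iInter.2 fun n => ((hspec n).2.1 (humem (n + 1))).1⟩
  exact hB₀ (humem 0)
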